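/- arXiv:1705.06241 — 3 statements merged into one kernel-verified Lean document; each statement's English description precedes it below -/
import Mathlib

section
/- Let A be a commutative ring, let a_1, …, a_n ∈ A, let p be a prime number, and set C = A[x_1, …, x_n]/(a_i − p·x_i : 1 ≤ i ≤ n). Let B be a commutative A-algebra in which p is a nonzerodivisor and such that the image of each a_i in B lies in p·B. Then there exists a unique A-algebra homomorphism C → B. -/
/-- Let `A` be a commutative ring, `a_1, …, a_n ∈ A`, `p` a prime, and
`C = A[x_1, …, x_n]/(a_i − p·x_i)`.  Let `B` be a commutative `A`-algebra in which `p` is a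
nonzerodivisor and such that the image of each `a_i` in `B` lies in `p·B`.  Then there is a
unique `A`-algebra homomorphism `C → B`. -/
theorem existsUnique_algHom_dilatation
    (A : Type*) [CommRing A] (p n : ℕ) (hp : p.Prime) (a : Fin n → A)
    (B : Type*) [CommRing B] [Algebra A B]
    (hreg : ∀ b : B, (p : B) * b = 0 → b = 0)
    (hmem : ∀ i, algebraMap A B (a i) ∈ Ideal.span {(p : B)}) :
    ∃! _f : (MvPolynomial (Fin n) A ⧸ Ideal.span (Set.range fun i =>
        MvPolynomial.C (a i) - (p : MvPolynomial (Fin n) A) * MvPolynomial.X i)) →ₐ[A] B,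
      True := by
  have hb : ∀ i, ∃ b : B, algebraMap A B (a i) = (p : B) * b := by
    intro i
    rcases Ideal.mem_span_singleton.mp (hmem i) with ⟨c, hc⟩
    exact ⟨c, hc⟩
  choose b hbspec using hb
  set I : Ideal (MvPolynomial (Fin n) A) := Ideal.span (Set.range fun i =>
        MvPolynomial.C (a i) - (p : MvPolynomial (Fin n) A) * MvPolynomial.X i) with hI
  have hker : ∀ q ∈ I, MvPolynomial.aeval b q = 0 := by
    intro q hq
    rw [← RingHom.mem_ker]
    refine Ideal.span_le.mpr ?_ hq
    rintro _ ⟨i, rfl⟩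
    simp [RingHom.mem_ker, MvPolynomial.algebraMap_eq, hbspec i]
  refine ⟨Ideal.Quotient.liftₐ I (MvPolynomial.aeval b) hker, trivial, ?_⟩
  intro g _
  apply Ideal.Quotient.algHom_ext
  apply MvPolynomial.algHom_ext
  intro i
  simp only [AlgHom.comp_apply, Ideal.Quotient.mkₐ_eq_mk, Ideal.Quotient.liftₐ_apply,
    Ideal.Quotient.lift_mk, AlgHom.coe_toRingHom, MvPolynomial.aeval_X]
  have key : (p : B) * g (Ideal.Quotient.mk I (MvPolynomial.X i)) = (p : B) * b i := by
    have hrel : (Ideal.Quotient.mk I (MvPolynomial.C (a i)) :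
        MvPolynomial (Fin n) A ⧸ I) =
        Ideal.Quotient.mk I ((p : MvPolynomial (Fin n) A) * MvPolynomial.X i) := by
      rw [Ideal.Quotient.eq]
      exact Ideal.subset_span ⟨i, rfl⟩
    have h1 : g (Ideal.Quotient.mk I (MvPolynomial.C (a i))) = algebraMap A B (a i) := by
      have : (Ideal.Quotient.mk I (MvPolynomial.C (a i))) =
          algebraMap A _ (a i) := rfl
      rw [this, AlgHom.commutes]
    calc (p : B) * g (Ideal.Quotient.mk I (MvPolynomial.X i))
        = g (Ideal.Quotient.mk I ((p : MvPolynomial (Fin n) A) * MvPolynomial.X i)) := by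
          push_cast [map_mul, map_natCast]; ring
      _ = algebraMap A B (a i) := by rw [← hrel, h1]
      _ = (p : B) * b i := hbspec i
  exact (sub_eq_zero.mp (hreg (g (Ideal.Quotient.mk I (MvPolynomial.X i)) - b i)
    (by rw [mul_sub, key, sub_self]))).trans (MvPolynomial.aeval_X b i).symm
end

section
/- Let R be a commutative ring, B a Hopf R-algebra with comultiplication δ: B → B ⊗_R B, counit π: B → R and antipode σ: B → B, and let M be an R-module. Suppose ε: B ⊗_R M → M ⊗_R B is a B-linear map (where B acts on the source through the left tensor factor and on the target through the right tensor factor) such that: (i) applying the counit yields the identity of M, i.e., (id_M ⊗ π) ∘ ε ∘ (inclusion via π) = id in the sense that π^*(ε) = id_M; and (ii) the cocycle condition δ^*(ε) = (ε ⊗ id_B) ∘ (id_B ⊗ ε) holds after the natural identifications. Then ε is an isomorphism, with inverse σ^*(ε). -/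
open TensorProduct

/-- Let `R` be a commutative ring, `B` a (commutative) Hopf `R`-algebra, and `M` an
`R`-module.  Suppose `ε : B ⊗ M → M ⊗ B` is a `B`-linear map (for the `B`-action through
the left tensor factor on the source, and through the right tensor factor on the target)
such that applying the counit yields the identity of `M` and the cocycle condition holds.
Then `ε` is an isomorphism. -/
theorem stratification_bijective
    (R B M : Type*) [CommRing R] [CommRing B] [HopfAlgebra R B]
    [AddCommGroup M] [Module R M]
    (ε : B ⊗[R] M →ₗ[R] M ⊗[R] B)
    (hlin : ∀ (b' b : B) (m : M),
      ε ((b' * b) ⊗ₜ[R] m) = LinearMap.lTensor M (LinearMap.mulLeft R b') (ε (b ⊗ₜ[R] m)))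
    (hcounit : ∀ m : M,
      TensorProduct.rid R M
        (LinearMap.lTensor M (Coalgebra.counit (R := R) (A := B)) (ε ((1 : B) ⊗ₜ[R] m))) = m)
    (hcocycle : ∀ m : M,
      TensorProduct.assoc R M B B
          (LinearMap.rTensor B (ε ∘ₗ TensorProduct.mk R B M 1) (ε ((1 : B) ⊗ₜ[R] m)))
        = LinearMap.lTensor M (Coalgebra.comul (R := R) (A := B)) (ε ((1 : B) ⊗ₜ[R] m))) :
    Function.Bijective ε := by
  classical
  set σ : B →ₗ[R] B := HopfAlgebra.antipode (R := R) with hσdef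
  set ρ : M →ₗ[R] M ⊗[R] B := ε ∘ₗ TensorProduct.mk R B M 1 with hρdef
  have hρ : ∀ m : M, ρ m = ε ((1 : B) ⊗ₜ[R] m) := fun m => rfl
  set g : B ⊗[R] B →ₗ[R] B := LinearMap.mul' R B ∘ₗ LinearMap.rTensor B σ with hgdef
  have hg : ∀ d c : B, g (d ⊗ₜ[R] c) = σ d * c := by
    intro d c
    simp [hgdef]
  set η : M ⊗[R] B →ₗ[R] B ⊗[R] M :=
    (TensorProduct.comm R M B).toLinearMap ∘ₗ LinearMap.lTensor M g
      ∘ₗ (TensorProduct.assoc R M B B).toLinearMap ∘ₗ LinearMap.rTensor B ρ with hηdef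
  have hηtmul : ∀ (m : M) (c : B),
      η (m ⊗ₜ[R] c) = (TensorProduct.comm R M B) (LinearMap.lTensor M g
        ((TensorProduct.assoc R M B B) ((ρ m) ⊗ₜ[R] c))) := fun m c => rfl
  -- B-linearity in the convenient form
  have hε : ∀ (b : B) (m : M),
      ε (b ⊗ₜ[R] m) = LinearMap.lTensor M (LinearMap.mulLeft R b) (ρ m) := by
    intro b m
    simpa [hρ] using hlin b 1 m
  -- counit axiom in the convenient form
  have hcu : ∀ m : M,
      LinearMap.lTensor M (Coalgebra.counit (R := R) (A := B)) (ρ m) = m ⊗ₜ[R] (1 : R) := by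
    intro m
    apply (TensorProduct.rid R M).injective
    simpa [hρ] using hcounit m
  -- cocycle axiom in the convenient form
  have hco : ∀ m : M,
      TensorProduct.assoc R M B B (LinearMap.rTensor B ρ (ρ m))
        = LinearMap.lTensor M (Coalgebra.comul (R := R) (A := B)) (ρ m) := by
    intro m
    simpa [hρ] using hcocycle m
  -- key lemma: η (ρ m) = 1 ⊗ m
  have hηρ : ∀ m : M, η (ρ m) = (1 : B) ⊗ₜ[R] m := by
    intro m
    have : η (ρ m) = (TensorProduct.comm R M B) (LinearMap.lTensor M g
        ((TensorProduct.assoc R M B B) (LinearMap.rTensor B ρ (ρ m)))) := rfl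
    rw [this, hco m, ← LinearMap.comp_apply, ← LinearMap.lTensor_comp]
    have hHopf : g ∘ₗ Coalgebra.comul (R := R) (A := B)
        = (Algebra.linearMap R B) ∘ₗ Coalgebra.counit (R := R) (A := B) := by
      rw [hgdef, hσdef, LinearMap.comp_assoc]
      exact HopfAlgebra.mul_antipode_rTensor_comul
    rw [hHopf, LinearMap.lTensor_comp, LinearMap.comp_apply, hcu m]
    simp
  -- commuting η past left multiplication
  have keyA : ∀ (b c : B) (w : M ⊗[R] B),
      (TensorProduct.comm R M B) (LinearMap.lTensor M g
          ((TensorProduct.assoc R M B B) (w ⊗ₜ[R] (b * c))))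
        = LinearMap.rTensor M (LinearMap.mulLeft R b)
            ((TensorProduct.comm R M B) (LinearMap.lTensor M g
              ((TensorProduct.assoc R M B B) (w ⊗ₜ[R] c)))) := by
    intro b c w
    induction w using TensorProduct.induction_on with
    | zero => simp
    | tmul m'' d =>
        simp only [assoc_tmul, LinearMap.lTensor_tmul, comm_tmul, LinearMap.rTensor_tmul,
          hg, LinearMap.mulLeft_apply]
        rw [mul_left_comm]
    | add u v hu hv =>
        simp only [add_tmul, map_add, hu, hv]
  -- η is a left inverse of ε
  have hleft : ∀ x : B ⊗[R] M, η (ε x) = x := by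
    intro x
    induction x using TensorProduct.induction_on with
    | zero => simp
    | tmul b m =>
        rw [hε b m]
        have hcommute : ∀ z : M ⊗[R] B,
            η (LinearMap.lTensor M (LinearMap.mulLeft R b) z)
              = LinearMap.rTensor M (LinearMap.mulLeft R b) (η z) := by
          intro z
          induction z using TensorProduct.induction_on with
          | zero => simp
          | tmul m' c' =>
              simp only [LinearMap.lTensor_tmul, LinearMap.mulLeft_apply]
              rw [hηtmul, hηtmul, keyA]
          | add u v hu hv => simp only [map_add, hu, hv]
        rw [hcommute, hηρ m]
        simp
    | add u v hu hv => simp only [map_add, hu, hv]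
  -- ε is a right inverse of η
  have hright : ∀ x : M ⊗[R] B, ε (η x) = x := by
    intro x
    induction x using TensorProduct.induction_on with
    | zero => simp
    | tmul m b =>
        set h : B ⊗[R] B →ₗ[R] B :=
          LinearMap.mulRight R b ∘ₗ LinearMap.mul' R B ∘ₗ LinearMap.lTensor B σ with hhdef
        have hh : ∀ d c : B, h (d ⊗ₜ[R] c) = d * σ c * b := by
          intro d c
          simp [hhdef]
        have keyB : ∀ (c : B) (w : M ⊗[R] B),
            LinearMap.lTensor M h ((TensorProduct.assoc R M B B) (w ⊗ₜ[R] c))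
              = LinearMap.lTensor M (LinearMap.mulLeft R (σ c * b)) w := by
          intro c w
          induction w using TensorProduct.induction_on with
          | zero => simp
          | tmul m'' d =>
              simp only [assoc_tmul, LinearMap.lTensor_tmul, hh, LinearMap.mulLeft_apply]
              rw [mul_comm (σ c * b) d, mul_assoc]
          | add u v hu hv => simp only [add_tmul, map_add, hu, hv]
        have key : ∀ z : M ⊗[R] B,
            ε ((TensorProduct.comm R M B) (LinearMap.lTensor M g
                ((TensorProduct.assoc R M B B) (z ⊗ₜ[R] b))))
              = LinearMap.lTensor M h
                ((TensorProduct.assoc R M B B) (LinearMap.rTensor B ρ z)) := by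
          intro z
          induction z using TensorProduct.induction_on with
          | zero => simp
          | tmul m' c' =>
              simp only [assoc_tmul, LinearMap.lTensor_tmul, comm_tmul, hg,
                LinearMap.rTensor_tmul]
              rw [hε (σ c' * b) m', keyB]
          | add u v hu hv =>
              simp only [add_tmul, map_add, hu, hv]
        have : η (m ⊗ₜ[R] b) = (TensorProduct.comm R M B) (LinearMap.lTensor M g
            ((TensorProduct.assoc R M B B) ((ρ m) ⊗ₜ[R] b))) := rfl
        rw [this, key (ρ m),
          show (TensorProduct.assoc R M B B) (LinearMap.rTensor B ρ (ρ m))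
            = LinearMap.lTensor M (Coalgebra.comul (R := R) (A := B)) (ρ m) from hco m,
          ← LinearMap.comp_apply, ← LinearMap.lTensor_comp]
        have hHopf : (LinearMap.mul' R B ∘ₗ LinearMap.lTensor B σ) ∘ₗ
              Coalgebra.comul (R := R) (A := B)
            = (Algebra.linearMap R B) ∘ₗ Coalgebra.counit (R := R) (A := B) := by
          rw [hσdef, LinearMap.comp_assoc]
          exact HopfAlgebra.mul_antipode_lTensor_comul
        have hcomp : h ∘ₗ Coalgebra.comul (R := R) (A := B)
            = LinearMap.mulRight R b ∘ₗ (Algebra.linearMap R B) ∘ₗ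
                Coalgebra.counit (R := R) (A := B) := by
          apply LinearMap.ext
          intro x
          have hx := LinearMap.congr_fun hHopf x
          simp only [LinearMap.comp_apply] at hx ⊢
          rw [hhdef]
          simp only [LinearMap.comp_apply, hx]
        rw [hcomp, LinearMap.lTensor_comp, LinearMap.lTensor_comp, LinearMap.comp_apply,
          LinearMap.comp_apply, hcu m]
        simp
    | add u v hu hv => simp only [map_add, hu, hv]
  exact Function.bijective_iff_has_inverse.2 ⟨η, hleft, hright⟩
end

section
/- Let R → S be a homomorphism of commutative rings, p ∈ R, and let M be an S-module with an R-linear connection ∇: M → M ⊗_S Ω_{S/R} (satisfying the usual Leibniz rule). Let M = M^0 ⊇ M^1 ⊇ … ⊇ M^ℓ ⊇ M^{ℓ+1} = 0 be a decreasing filtration by S-submodules satisfying Griffiths transversality: ∇(M^i) ⊆ M^{i-1} ⊗_S Ω_{S/R} for 1 ≤ i ≤ ℓ. Define g: ⊕_{i=1}^{ℓ} M^i → ⊕_{i=0}^{ℓ} M^i by sending m ∈ M^i to (m, −p·m) ∈ M^{i-1} ⊕ M^i, and set M̃ = coker(g). Let h: ⊕_{i=0}^{ℓ} M^i → (⊕_{i=0}^{ℓ}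 M^i) ⊗_S Ω_{S/R} be given by h|_{M^i} = ∇ (landing in M^{i-1} ⊗ Ω) for i ≥ 1 and h|_{M^0} = p·∇. Then h descends to a well-defined R-linear map ∇̃: M̃ → M̃ ⊗_S Ω_{S/R} satisfying the p-Leibniz rule ∇̃(s·x) = s·∇̃(x) + p·(x ⊗ ds) for all s ∈ S and x ∈ M̃; i.e., ∇̃ is a p-connection on M̃. -/
open TensorProduct

section

variable {R S : Type*} [CommRing R] [CommRing S] [Algebra R S]
variable {M : Type*} [AddCommGroup M] [Module S M]

/-- The submodule of relations defining the Rees-type module `M̃`: for `m ∈ M^{i+1}`,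
the element `(m)_i − (p·m)_{i+1}` of `⊕_{j=0}^{ℓ} M^j`. -/
def reesRel (p : R) (ℓ : ℕ) (F : ℕ → Submodule S M) (hFdec : ∀ i, F (i + 1) ≤ F i) :
    Submodule S (∀ j : Fin (ℓ + 1), ↥(F (j : ℕ))) :=
  Submodule.span S {y | ∃ (i : ℕ) (hi : i < ℓ) (m : ↥(F (i + 1))),
    y = Pi.single (⟨i, Nat.lt_succ_of_lt hi⟩ : Fin (ℓ + 1))
          (Submodule.inclusion (hFdec i) m)
      - Pi.single (⟨i + 1, Nat.succ_lt_succ hi⟩ : Fin (ℓ + 1)) (algebraMap R S p • m)}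

/-- The map `M^j ⊗ Ω → M̃ ⊗ Ω` induced by placing `M^j` in degree `j` of `M̃`. -/
noncomputable def reesEmb (p : R) (ℓ : ℕ) (F : ℕ → Submodule S M)
    (hFdec : ∀ i, F (i + 1) ≤ F i) (j : ℕ) (hj : j < ℓ + 1) :
    ↥(F j) ⊗[S] KaehlerDifferential R S →ₗ[S]
      ((∀ k : Fin (ℓ + 1), ↥(F (k : ℕ))) ⧸ reesRel p ℓ F hFdec) ⊗[S]
        KaehlerDifferential R S :=
  LinearMap.rTensor (KaehlerDifferential R S)
    ((reesRel p ℓ F hFdec).mkQ ∘ₗ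
      LinearMap.single S (fun k : Fin (ℓ + 1) => ↥(F (k : ℕ))) ⟨j, hj⟩)

/-- Auxiliary: the map `h` on the direct sum, given choices `D0` (a lift of `D` on `F 0`)
and `Du` (lifts of `D : F (j+1) → F j ⊗ Ω`). -/
noncomputable def reesH (p : R) (ℓ : ℕ) (F : ℕ → Submodule S M)
    (hFdec : ∀ i, F (i + 1) ≤ F i)
    (D0 : ↥(F 0) → ↥(F 0) ⊗[S] KaehlerDifferential R S)
    (Du : ∀ j : ℕ, j < ℓ → ↥(F (j + 1)) → ↥(F j) ⊗[S] KaehlerDifferential R S)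
    (v : ∀ k : Fin (ℓ + 1), ↥(F (k : ℕ))) :
    ((∀ k : Fin (ℓ + 1), ↥(F (k : ℕ))) ⧸ reesRel p ℓ F hFdec) ⊗[S]
      KaehlerDifferential R S :=
  algebraMap R S p • reesEmb p ℓ F hFdec 0 (Nat.succ_pos ℓ)
      (D0 (v ⟨0, Nat.succ_pos ℓ⟩)) +
    ∑ j : Fin ℓ, reesEmb p ℓ F hFdec (j : ℕ) (Nat.lt_succ_of_lt j.isLt)
      (Du (j : ℕ) j.isLt (v ⟨(j : ℕ) + 1, Nat.succ_lt_succ j.isLt⟩))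


lemma reesSingle_eq_of_ne {ℓ : ℕ} {F : ℕ → Submodule S M} {i i' : Fin (ℓ + 1)}
    (h : i' ≠ i) (x : ↥(F (i : ℕ))) :
    Pi.single (M := fun k : Fin (ℓ + 1) => ↥(F (k : ℕ))) i x i' = 0 :=
  Pi.single_eq_of_ne (M := fun k : Fin (ℓ + 1) => ↥(F (k : ℕ))) h x

set_option maxHeartbeats 1000000 in

/-- Let `R → S` be a homomorphism of commutative rings, `p ∈ R`, and `M` an `S`-module
with an `R`-linear connection `∇ : M → M ⊗_S Ω_{S/R}` and a decreasing filtration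
`M = M^0 ⊇ ⋯ ⊇ M^{ℓ+1} = 0` satisfying Griffiths transversality.  Let
`M̃ = coker(⊕_{i=1}^ℓ M^i → ⊕_{i=0}^ℓ M^i)`, `m ↦ (m, −p·m)`, and let `h` be given by `∇`
(shifting the level down by one) on `M^i` for `i ≥ 1` and by `p·∇` on `M^0`.  Then `h`
descends to a well-defined `R`-linear map `∇̃ : M̃ → M̃ ⊗_S Ω_{S/R}` satisfying the
`p`-Leibniz rule; i.e. `∇̃` is a `p`-connection on `M̃`. -/

theorem exists_p_connection_on_rees_module
    (R S : Type*) [CommRing R] [CommRing S] [Algebra R S] (p : R)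
    (M : Type*) [AddCommGroup M] [Module S M]
    (D : M → M ⊗[S] KaehlerDifferential R S)
    (hDadd : ∀ x y : M, D (x + y) = D x + D y)
    (hDlin : ∀ (r : R) (x : M), D (algebraMap R S r • x) = algebraMap R S r • D x)
    (hDleib : ∀ (s : S) (x : M), D (s • x) = s • D x + x ⊗ₜ[S] KaehlerDifferential.D R S s)
    (ℓ : ℕ) (F : ℕ → Submodule S M)
    (hF0 : F 0 = ⊤) (hFdec : ∀ i, F (i + 1) ≤ F i) (hFlast : F (ℓ + 1) = ⊥)
    -- `M^j ⊗ Ω` is regarded as a subset of `M ⊗ Ω`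
    (hinj : ∀ j : ℕ, Function.Injective
      (TensorProduct.map (F j).subtype
        (LinearMap.id : KaehlerDifferential R S →ₗ[S] KaehlerDifferential R S)))
    -- Griffiths transversality: `∇(M^i) ⊆ M^{i-1} ⊗ Ω` for `1 ≤ i ≤ ℓ`
    (hGriffiths : ∀ i : ℕ, 1 ≤ i → i ≤ ℓ → ∀ x ∈ F i, D x ∈ LinearMap.range
      (TensorProduct.map (F (i - 1)).subtype
        (LinearMap.id : KaehlerDifferential R S →ₗ[S] KaehlerDifferential R S))) :
    ∃ Dt : ((∀ k : Fin (ℓ + 1), ↥(F (k : ℕ))) ⧸ reesRel p ℓ F hFdec) →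
        ((∀ k : Fin (ℓ + 1), ↥(F (k : ℕ))) ⧸ reesRel p ℓ F hFdec) ⊗[S]
          KaehlerDifferential R S,
      -- additivity
      (∀ a b, Dt (a + b) = Dt a + Dt b) ∧
      -- `R`-linearity
      (∀ (r : R) a, Dt (algebraMap R S r • a) = algebraMap R S r • Dt a) ∧
      -- the `p`-Leibniz rule: `∇̃` is a `p`-connection
      (∀ (s : S) a, Dt (s • a) = s • Dt a
        + algebraMap R S p • (a ⊗ₜ[S] KaehlerDifferential.D R S s)) ∧
      -- on the class of `x ∈ M^i` (for `1 ≤ i ≤ ℓ`), `∇̃` is induced by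
      -- `∇ : M^i → M^{i-1} ⊗ Ω`, placed in level `i - 1`
      (∀ (i : ℕ) (hi : i < ℓ + 1), 1 ≤ i → ∀ (x : ↥(F i))
        (y : ↥(F (i - 1)) ⊗[S] KaehlerDifferential R S),
        TensorProduct.map (F (i - 1)).subtype LinearMap.id y = D (x : M) →
        Dt ((reesRel p ℓ F hFdec).mkQ (Pi.single (⟨i, hi⟩ : Fin (ℓ + 1)) x))
          = reesEmb p ℓ F hFdec (i - 1) (lt_of_le_of_lt (Nat.sub_le i 1) hi) y) ∧
      -- on the class of `x ∈ M^0`, `∇̃` is induced by `p·∇ : M^0 → M^0 ⊗ Ω`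
      (∀ (x : ↥(F 0)) (y : ↥(F 0) ⊗[S] KaehlerDifferential R S),
        TensorProduct.map (F 0).subtype LinearMap.id y = D (x : M) →
        Dt ((reesRel p ℓ F hFdec).mkQ
            (Pi.single (⟨0, Nat.succ_pos ℓ⟩ : Fin (ℓ + 1)) x))
          = algebraMap R S p • reesEmb p ℓ F hFdec 0 (Nat.succ_pos ℓ) y) := by
  classical
  have hDzero : D 0 = 0 := by
    have h := hDadd 0 0
    rw [add_zero] at h
    nth_rewrite 1 [← add_zero (D 0)] at h
    exact (add_left_cancel h).symm
  have hDneg : ∀ x : M, D (-x) = -D x := by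
    intro x
    have h := hDadd (-x) x
    rw [neg_add_cancel, hDzero] at h
    exact eq_neg_of_add_eq_zero_left h.symm
  have huniq : ∀ (j : ℕ) {y z : ↥(F j) ⊗[S] KaehlerDifferential R S},
      TensorProduct.map (F j).subtype
          (LinearMap.id : KaehlerDifferential R S →ₗ[S] KaehlerDifferential R S) y
        = TensorProduct.map (F j).subtype LinearMap.id z → y = z :=
    fun j _ _ h => hinj j h
  have hex0 : ∀ x : ↥(F 0), ∃ y : ↥(F 0) ⊗[S] KaehlerDifferential R S,
      TensorProduct.map (F 0).subtype
        (LinearMap.id : KaehlerDifferential R S →ₗ[S] KaehlerDifferential R S) y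
        = D (x : M) := by
    intro x
    have hs : Function.Surjective (F 0).subtype :=
      fun m => ⟨⟨m, hF0 ▸ Submodule.mem_top⟩, rfl⟩
    exact LinearMap.rTensor_surjective (KaehlerDifferential R S) hs (D (x : M))
  choose D0 hD0 using hex0
  have hexu : ∀ (j : ℕ), j < ℓ → ∀ x : ↥(F (j + 1)),
      ∃ y : ↥(F j) ⊗[S] KaehlerDifferential R S,
        TensorProduct.map (F j).subtype
          (LinearMap.id : KaehlerDifferential R S →ₗ[S] KaehlerDifferential R S) y
          = D (x : M) := by
    intro j hj x
    obtain ⟨y, hy⟩ := LinearMap.mem_range.mp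
      (hGriffiths (j + 1) (Nat.succ_le_succ (Nat.zero_le j)) hj x x.2)
    exact ⟨y, hy⟩
  choose Du hDu using hexu
  -- basic algebraic properties of the chosen lifts
  have hD0zero : D0 0 = 0 := by
    apply huniq 0
    rw [hD0, map_zero]
    simp [hDzero]
  have hD0add : ∀ x y : ↥(F 0), D0 (x + y) = D0 x + D0 y := by
    intro x y
    apply huniq 0
    rw [map_add, hD0, hD0, hD0, Submodule.coe_add, hDadd]
  have hD0neg : ∀ x : ↥(F 0), D0 (-x) = -D0 x := by
    intro x
    apply huniq 0
    rw [map_neg, hD0, hD0]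
    simp [hDneg]
  have hD0leib : ∀ (s : S) (x : ↥(F 0)),
      D0 (s • x) = s • D0 x + x ⊗ₜ[S] KaehlerDifferential.D R S s := by
    intro s x
    apply huniq 0
    rw [map_add, map_smul, hD0, hD0, TensorProduct.map_tmul, LinearMap.id_apply]
    simp [hDleib]
  have hDuzero : ∀ (j : ℕ) (hj : j < ℓ), Du j hj 0 = 0 := by
    intro j hj
    apply huniq j
    rw [hDu, map_zero]
    simp [hDzero]
  have hDuadd : ∀ (j : ℕ) (hj : j < ℓ) (x y : ↥(F (j + 1))),
      Du j hj (x + y) = Du j hj x + Du j hj y := by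
    intro j hj x y
    apply huniq j
    rw [map_add, hDu, hDu, hDu, Submodule.coe_add, hDadd]
  have hDuneg : ∀ (j : ℕ) (hj : j < ℓ) (x : ↥(F (j + 1))),
      Du j hj (-x) = -Du j hj x := by
    intro j hj x
    apply huniq j
    rw [map_neg, hDu, hDu]
    simp [hDneg]
  have hDusmulp : ∀ (j : ℕ) (hj : j < ℓ) (x : ↥(F (j + 1))),
      Du j hj (algebraMap R S p • x) = algebraMap R S p • Du j hj x := by
    intro j hj x
    apply huniq j
    rw [map_smul, hDu, hDu]
    simp [hDlin]
  have hDuleib : ∀ (j : ℕ) (hj : j < ℓ) (s : S) (x : ↥(F (j + 1))),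
      Du j hj (s • x) = s • Du j hj x
        + (Submodule.inclusion (hFdec j) x) ⊗ₜ[S] KaehlerDifferential.D R S s := by
    intro j hj s x
    apply huniq j
    rw [map_add, map_smul, hDu, hDu, TensorProduct.map_tmul, LinearMap.id_apply]
    simp [hDleib, Submodule.coe_inclusion]
  -- compatibility of the lifts across levels
  have hmapincl : ∀ (j : ℕ) (y : ↥(F (j + 1)) ⊗[S] KaehlerDifferential R S),
      TensorProduct.map (F j).subtype
          (LinearMap.id : KaehlerDifferential R S →ₗ[S] KaehlerDifferential R S)
          (LinearMap.rTensor (KaehlerDifferential R S)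
            (Submodule.inclusion (hFdec j)) y)
        = TensorProduct.map (F (j + 1)).subtype LinearMap.id y := by
    intro j y
    induction y using TensorProduct.induction_on with
    | zero => simp
    | tmul m ω =>
      rw [LinearMap.rTensor_tmul, TensorProduct.map_tmul, TensorProduct.map_tmul]
      simp [Submodule.coe_inclusion]
    | add a b ha hb => rw [map_add, map_add, map_add, ha, hb]
  have hcross0 : ∀ (h0 : 0 < ℓ) (m : ↥(F 1)),
      D0 (Submodule.inclusion (hFdec 0) m) = Du 0 h0 m := by
    intro h0 m
    apply huniq 0
    rw [hD0, hDu]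
    simp [Submodule.coe_inclusion]
  have hcross : ∀ (j : ℕ) (hj : j < ℓ) (hj1 : j + 1 < ℓ) (m : ↥(F (j + 2))),
      Du j hj (Submodule.inclusion (hFdec (j + 1)) m)
        = LinearMap.rTensor (KaehlerDifferential R S)
            (Submodule.inclusion (hFdec j)) (Du (j + 1) hj1 m) := by
    intro j hj hj1 m
    apply huniq j
    rw [hDu, hmapincl, hDu]
    simp [Submodule.coe_inclusion]
  -- the quotient relation
  have hqrel : ∀ (j : ℕ) (hj : j < ℓ) (m : ↥(F (j + 1))),
      (reesRel p ℓ F hFdec).mkQ (Pi.single (⟨j, Nat.lt_succ_of_lt hj⟩ : Fin (ℓ + 1))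
          (Submodule.inclusion (hFdec j) m))
        = (reesRel p ℓ F hFdec).mkQ
            (Pi.single (⟨j + 1, Nat.succ_lt_succ hj⟩ : Fin (ℓ + 1))
              (algebraMap R S p • m)) := by
    intro j hj m
    rw [Submodule.mkQ_apply, Submodule.mkQ_apply, Submodule.Quotient.eq]
    exact Submodule.subset_span ⟨j, hj, m, rfl⟩
  have hembtmul : ∀ (j : ℕ) (hj : j < ℓ + 1) (x : ↥(F j)) (ω : KaehlerDifferential R S),
      reesEmb p ℓ F hFdec j hj (x ⊗ₜ[S] ω)
        = (reesRel p ℓ F hFdec).mkQ (Pi.single (⟨j, hj⟩ : Fin (ℓ + 1)) x) ⊗ₜ[S] ω := by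
    intro j hj x ω
    simp [reesEmb, LinearMap.rTensor_tmul]
  have hembincl : ∀ (j : ℕ) (hj : j < ℓ) (x : ↥(F (j + 1))) (ω : KaehlerDifferential R S),
      reesEmb p ℓ F hFdec j (Nat.lt_succ_of_lt hj)
          ((Submodule.inclusion (hFdec j) x) ⊗ₜ[S] ω)
        = algebraMap R S p • ((reesRel p ℓ F hFdec).mkQ
            (Pi.single (⟨j + 1, Nat.succ_lt_succ hj⟩ : Fin (ℓ + 1)) x) ⊗ₜ[S] ω) := by
    intro j hj x ω
    rw [hembtmul, hqrel j hj x, Pi.single_smul, map_smul, TensorProduct.smul_tmul']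
  have hembshift : ∀ (j : ℕ) (hj : j < ℓ) (y : ↥(F (j + 1)) ⊗[S] KaehlerDifferential R S),
      reesEmb p ℓ F hFdec j (Nat.lt_succ_of_lt hj)
          (LinearMap.rTensor (KaehlerDifferential R S) (Submodule.inclusion (hFdec j)) y)
        = algebraMap R S p • reesEmb p ℓ F hFdec (j + 1) (Nat.succ_lt_succ hj) y := by
    intro j hj y
    induction y using TensorProduct.induction_on with
    | zero => simp
    | tmul m ω =>
      rw [LinearMap.rTensor_tmul, hembincl j hj m ω, hembtmul]
    | add a b ha hb => rw [map_add, map_add, map_add, smul_add, ha, hb]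
  -- properties of H
  have hHsingle0 : ∀ x : ↥(F 0),
      reesH p ℓ F hFdec D0 Du (Pi.single (⟨0, Nat.succ_pos ℓ⟩ : Fin (ℓ + 1)) x)
        = algebraMap R S p • reesEmb p ℓ F hFdec 0 (Nat.succ_pos ℓ) (D0 x) := by
    intro x
    rw [reesH]
    have h1 : ∀ j : Fin ℓ,
        (Pi.single (M := fun k : Fin (ℓ + 1) => ↥(F (k : ℕ)))
            (⟨0, Nat.succ_pos ℓ⟩ : Fin (ℓ + 1)) x)
          ⟨(j : ℕ) + 1, Nat.succ_lt_succ j.isLt⟩ = 0 := by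
      intro j
      exact reesSingle_eq_of_ne (i := ⟨0, Nat.succ_pos ℓ⟩)
        (i' := ⟨(j : ℕ) + 1, Nat.succ_lt_succ j.isLt⟩) (by simp [Fin.ext_iff]) x
    rw [Pi.single_eq_same]
    simp only [h1, hDuzero, map_zero, Finset.sum_const_zero, add_zero]
  have hHsingleS : ∀ (j : ℕ) (hj : j < ℓ) (x : ↥(F (j + 1))),
      reesH p ℓ F hFdec D0 Du
          (Pi.single (⟨j + 1, Nat.succ_lt_succ hj⟩ : Fin (ℓ + 1)) x)
        = reesEmb p ℓ F hFdec j (Nat.lt_succ_of_lt hj) (Du j hj x) := by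
    intro j hj x
    rw [reesH]
    have h0 : (Pi.single (M := fun k : Fin (ℓ + 1) => ↥(F (k : ℕ)))
          (⟨j + 1, Nat.succ_lt_succ hj⟩ : Fin (ℓ + 1)) x)
        ⟨0, Nat.succ_pos ℓ⟩ = 0 :=
      reesSingle_eq_of_ne (i := ⟨j + 1, Nat.succ_lt_succ hj⟩)
        (i' := ⟨0, Nat.succ_pos ℓ⟩) (by simp [Fin.ext_iff]) x
    rw [h0, hD0zero, map_zero, smul_zero, zero_add]
    rw [Finset.sum_eq_single (⟨j, hj⟩ : Fin ℓ)]
    · exact congrArg (fun t => reesEmb p ℓ F hFdec j (Nat.lt_succ_of_lt hj) (Du j hj t))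
        (Pi.single_eq_same (M := fun k : Fin (ℓ + 1) => ↥(F (k : ℕ)))
          (⟨j + 1, Nat.succ_lt_succ hj⟩ : Fin (ℓ + 1)) x)
    · intro b _ hb
      have hne : (⟨(b : ℕ) + 1, Nat.succ_lt_succ b.isLt⟩ : Fin (ℓ + 1))
          ≠ ⟨j + 1, Nat.succ_lt_succ hj⟩ := by
        simp only [ne_eq, Fin.mk.injEq, Nat.add_right_cancel_iff]
        intro h
        exact hb (Fin.ext h)
      rw [reesSingle_eq_of_ne hne, hDuzero, map_zero]
    · intro h
      exact absurd (Finset.mem_univ _) h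
  have hHzero : reesH p ℓ F hFdec D0 Du 0 = 0 := by
    rw [reesH]
    simp [hD0zero, hDuzero]
  have hHadd : ∀ u v, reesH p ℓ F hFdec D0 Du (u + v)
      = reesH p ℓ F hFdec D0 Du u + reesH p ℓ F hFdec D0 Du v := by
    intro u v
    simp only [reesH, Pi.add_apply, hD0add, hDuadd, map_add, smul_add,
      Finset.sum_add_distrib]
    abel
  have hHneg : ∀ v, reesH p ℓ F hFdec D0 Du (-v) = -reesH p ℓ F hFdec D0 Du v := by
    intro v
    have h := hHadd v (-v)
    rw [add_neg_cancel, hHzero] at h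
    exact (neg_eq_of_add_eq_zero_right h.symm).symm
  have hHsub : ∀ u v, reesH p ℓ F hFdec D0 Du (u - v)
      = reesH p ℓ F hFdec D0 Du u - reesH p ℓ F hFdec D0 Du v := by
    intro u v
    rw [sub_eq_add_neg, hHadd, hHneg, sub_eq_add_neg]
  have hqv : ∀ v : (∀ k : Fin (ℓ + 1), ↥(F (k : ℕ))),
      (reesRel p ℓ F hFdec).mkQ v
        = (reesRel p ℓ F hFdec).mkQ
            (Pi.single (⟨0, Nat.succ_pos ℓ⟩ : Fin (ℓ + 1)) (v ⟨0, Nat.succ_pos ℓ⟩))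
          + ∑ j : Fin ℓ, (reesRel p ℓ F hFdec).mkQ
              (Pi.single (⟨(j : ℕ) + 1, Nat.succ_lt_succ j.isLt⟩ : Fin (ℓ + 1))
                (v ⟨(j : ℕ) + 1, Nat.succ_lt_succ j.isLt⟩)) := by
    intro v
    conv_lhs => rw [← Finset.univ_sum_single v]
    rw [map_sum, Fin.sum_univ_succ]
    rfl
  have hHleib : ∀ (s : S) (v : ∀ k : Fin (ℓ + 1), ↥(F (k : ℕ))),
      reesH p ℓ F hFdec D0 Du (s • v)
        = s • reesH p ℓ F hFdec D0 Du v
          + algebraMap R S p • ((reesRel p ℓ F hFdec).mkQ v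
              ⊗ₜ[S] KaehlerDifferential.D R S s) := by
    intro s v
    conv_lhs => rw [reesH]
    simp only [Pi.smul_apply, hD0leib, hDuleib, map_add, map_smul, smul_add,
      Finset.sum_add_distrib]
    rw [Finset.sum_congr rfl (fun (j : Fin ℓ) _ => hembincl (j : ℕ) j.isLt
      (v ⟨(j : ℕ) + 1, Nat.succ_lt_succ j.isLt⟩) (KaehlerDifferential.D R S s))]
    rw [hembtmul 0 (Nat.succ_pos ℓ) (v ⟨0, Nat.succ_pos ℓ⟩) (KaehlerDifferential.D R S s)]
    conv_rhs => rw [reesH, hqv v]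
    rw [TensorProduct.add_tmul, TensorProduct.sum_tmul]
    simp only [smul_add, Finset.smul_sum, smul_smul, mul_comm]
    abel
  have hHlin : ∀ (r : R) (v : ∀ k : Fin (ℓ + 1), ↥(F (k : ℕ))),
      reesH p ℓ F hFdec D0 Du (algebraMap R S r • v)
        = algebraMap R S r • reesH p ℓ F hFdec D0 Du v := by
    intro r v
    rw [hHleib, Derivation.map_algebraMap, TensorProduct.tmul_zero, smul_zero, add_zero]
  have hHgen : ∀ (i : ℕ) (hi : i < ℓ) (m : ↥(F (i + 1))),
      reesH p ℓ F hFdec D0 Du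
          (Pi.single (⟨i, Nat.lt_succ_of_lt hi⟩ : Fin (ℓ + 1))
              (Submodule.inclusion (hFdec i) m)
            - Pi.single (⟨i + 1, Nat.succ_lt_succ hi⟩ : Fin (ℓ + 1))
                (algebraMap R S p • m)) = 0 := by
    intro i hi m
    rw [hHsub]
    rcases i with _ | j
    · rw [hHsingle0, hHsingleS 0 hi, hcross0 hi m, hDusmulp, map_smul, sub_self]
    · rw [hHsingleS j (Nat.lt_of_succ_lt hi) (Submodule.inclusion (hFdec (j + 1)) m),
        hHsingleS (j + 1) hi, hcross j (Nat.lt_of_succ_lt hi) hi m,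
        hembshift j (Nat.lt_of_succ_lt hi), hDusmulp, map_smul, sub_self]
  have hHrel : ∀ v ∈ reesRel p ℓ F hFdec, reesH p ℓ F hFdec D0 Du v = 0 := by
    intro v hv
    refine Submodule.span_induction
      (p := fun v _ => reesH p ℓ F hFdec D0 Du v = 0) ?_ hHzero ?_ ?_ hv
    · rintro x ⟨i, hi, m, rfl⟩
      exact hHgen i hi m
    · intro x y _ _ ihx ihy
      rw [hHadd, ihx, ihy, add_zero]
    · intro s x hx ih
      have hq0 : (reesRel p ℓ F hFdec).mkQ x = 0 := by
        rw [Submodule.mkQ_apply, Submodule.Quotient.mk_eq_zero]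
        exact hx
      rw [hHleib, ih, smul_zero, zero_add, hq0, TensorProduct.zero_tmul, smul_zero]
  -- definition of the descended map
  have hwd : ∀ u w : (∀ k : Fin (ℓ + 1), ↥(F (k : ℕ))),
      Submodule.quotientRel (reesRel p ℓ F hFdec) u w → reesH p ℓ F hFdec D0 Du u = reesH p ℓ F hFdec D0 Du w := by
    intro u w h
    have hm : u - w ∈ reesRel p ℓ F hFdec :=
      (Submodule.quotientRel_def _).mp h
    have h0 := hHrel _ hm
    rw [hHsub] at h0
    exact sub_eq_zero.mp h0
  refine ⟨fun a => Quotient.liftOn' a (reesH p ℓ F hFdec D0 Du) hwd, ?_, ?_, ?_, ?_, ?_⟩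
  · intro a b
    obtain ⟨u, rfl⟩ := Submodule.mkQ_surjective _ a
    obtain ⟨w, rfl⟩ := Submodule.mkQ_surjective _ b
    rw [← map_add]
    exact hHadd u w
  · intro r a
    obtain ⟨u, rfl⟩ := Submodule.mkQ_surjective _ a
    rw [← map_smul]
    exact hHlin r u
  · intro s a
    obtain ⟨u, rfl⟩ := Submodule.mkQ_surjective _ a
    rw [← map_smul]
    exact hHleib s u
  · intro i hi h1 x y hy
    obtain ⟨j, rfl⟩ : ∃ j, i = j + 1 := ⟨i - 1, (Nat.succ_pred_eq_of_pos h1).symm⟩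
    have hj : j < ℓ := Nat.lt_of_succ_lt_succ hi
    have hDuy : Du j hj x = y := huniq j ((hDu j hj x).trans hy.symm)
    show reesH p ℓ F hFdec D0 Du (Pi.single (⟨j + 1, hi⟩ : Fin (ℓ + 1)) x) = _
    rw [hHsingleS j hj x, hDuy]
    exact rfl
  · intro x y hy
    have hD0y : D0 x = y := huniq 0 ((hD0 x).trans hy.symm)
    show reesH p ℓ F hFdec D0 Du
        (Pi.single (⟨0, Nat.succ_pos ℓ⟩ : Fin (ℓ + 1)) x) = _
    rw [hHsingle0 x, hD0y]


end
end
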